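/- For all x ∈ [0,1], |x²/(x²+(1−x)²) − x²(1 + 2(1−x))| ≤ 1/√(135 + 78√3), with equality iff x = (3 + √(3(−3+2√3)))/6 or x = 1 − (3 + √(3(−3+2√3)))/6. -/

import Mathlib

set_option maxHeartbeats 1000000

theorem stmt_9 (x₁ : ℝ) (hx₁ : x₁ = (3 + Real.sqrt (3 * (-3 + 2 * Real.sqrt 3))) / 6) :
    ∀ x ∈ Set.Icc (0 : ℝ) 1,
      |x ^ 2 / (x ^ 2 + (1 - x) ^ 2) - x ^ 2 * (1 + 2 * (1 - x))| ≤
        1 / Real.sqrt (135 + 78 * Real.sqrt 3) ∧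
      (|x ^ 2 / (x ^ 2 + (1 - x) ^ 2) - x ^ 2 * (1 + 2 * (1 - x))| =
          1 / Real.sqrt (135 + 78 * Real.sqrt 3) ↔ x = x₁ ∨ x = 1 - x₁) := by
  intro x hx
  obtain ⟨hx0, hxle⟩ := hx
  set a := Real.sqrt 3 with ha_def
  have ha_nn : 0 ≤ a := Real.sqrt_nonneg 3
  have ha2 : a ^ 2 = 3 := Real.sq_sqrt (by norm_num)
  set b := Real.sqrt (3 * (-3 + 2 * a)) with hb_def
  have hb_nn : 0 ≤ b := Real.sqrt_nonneg _
  have hb2 : b ^ 2 = 6 * a - 9 := by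
    rw [hb_def, Real.sq_sqrt (by nlinarith)]; ring
  set M : ℝ := Real.sqrt (135 + 78 * a) with hM_def
  have hc : (0 : ℝ) < 135 + 78 * a := by nlinarith
  have hM : 0 < M := Real.sqrt_pos.mpr hc
  have hM2 : M ^ 2 = 135 + 78 * a := Real.sq_sqrt hc.le
  clear_value a b M
  have ha_lb : (1.7 : ℝ) < a := by nlinarith
  have ha_ub : a < 1.8 := by nlinarith
  set D : ℝ := x ^ 2 + (1 - x) ^ 2 with hD_def
  set N : ℝ := 2 * x ^ 2 * (x - 1) ^ 2 * (2 * x - 1) with hN_def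
  set t : ℝ := x - x ^ 2 with ht_def
  set Q : ℝ := t ^ 3 + (3 / 4 - a / 3) * t ^ 2 + (3 / 4 - 5 / 12 * a) * t
      + (7 / 24 * a - 1 / 2) with hQ_def
  clear_value D N t Q
  have hD : (0 : ℝ) < D := by rw [hD_def]; nlinarith [sq_nonneg (2 * x - 1)]
  have hf : x ^ 2 / D - x ^ 2 * (1 + 2 * (1 - x)) = N / D := by
    rw [hD_def, hN_def]
    rw [div_sub' (by nlinarith [sq_nonneg (2 * x - 1)] : x ^ 2 + (1 - x) ^ 2 ≠ 0)]
    congr 1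
    ring
  -- key polynomial identity
  have key : ∀ s : ℝ, (1 - 2 * s) ^ 2 - 4 * (135 + 78 * a) * s ^ 4 * (1 - 4 * s)
      = 16 * (135 + 78 * a) * (s - (3 - a) / 6) ^ 2 *
        (s ^ 3 + (3 / 4 - a / 3) * s ^ 2 + (3 / 4 - 5 / 12 * a) * s + (7 / 24 * a - 1 / 2)) := by
    intro s
    linear_combination ((-271/3 : ℝ) + (121/2)*a + (-91/9)*a^2 + (1489/3)*s + (-209)*s*a
      + (130/9)*s*a^2 + (-2299/3)*s^2 + (98)*s^2*a + (104/9)*s^2*a^2 + (180)*s^3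
      + (104)*s^3*a) * ha2
  have ht_nn : 0 ≤ t := by rw [ht_def]; nlinarith
  have hQpos : 0 < Q := by
    have h1 : 0 ≤ t ^ 3 := pow_nonneg ht_nn 3
    have h2 : (0:ℝ) ≤ (3 / 4 - a / 3) * t ^ 2 := by
      apply mul_nonneg (by nlinarith) (sq_nonneg t)
    have h3 : (0:ℝ) ≤ (3 / 4 - 5 / 12 * a) * t := by
      apply mul_nonneg (by nlinarith) ht_nn
    have h4 : (0:ℝ) < 7 / 24 * a - 1 / 2 := by nlinarith
    rw [hQ_def]
    linarith
  -- D^2 - c N^2 = 16 c (t-s)^2 Q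
  have hmain : D ^ 2 - (135 + 78 * a) * N ^ 2
      = 16 * (135 + 78 * a) * (t - (3 - a) / 6) ^ 2 * Q := by
    have hk := key t
    rw [hQ_def]
    calc D ^ 2 - (135 + 78 * a) * N ^ 2
        = (1 - 2 * t) ^ 2 - 4 * (135 + 78 * a) * t ^ 4 * (1 - 4 * t) := by
          rw [hD_def, hN_def, ht_def]; ring
      _ = _ := hk
  have hineq : (135 + 78 * a) * N ^ 2 ≤ D ^ 2 := by
    have hRHS : 0 ≤ 16 * (135 + 78 * a) * (t - (3 - a) / 6) ^ 2 * Q :=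
      mul_nonneg (mul_nonneg (by linarith) (sq_nonneg _)) hQpos.le
    have h5 : 0 ≤ D ^ 2 - (135 + 78 * a) * N ^ 2 := by rw [hmain]; exact hRHS
    linarith
  rw [hf]
  have habs : |N / D| = |N| / D := by rw [abs_div, abs_of_pos hD]
  have hsq : (|N| / D * M) ^ 2 = (135 + 78 * a) * N ^ 2 / D ^ 2 := by
    rw [div_mul_eq_mul_div, div_pow, mul_pow, sq_abs, hM2]; ring
  have hterm_nn : 0 ≤ |N| / D * M := by positivity
  constructor
  · rw [habs, le_div_iff₀ hM]
    have h6 : (|N| / D * M) ^ 2 ≤ 1 := by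
      rw [hsq, div_le_one (by positivity)]; linarith
    nlinarith [h6, hterm_nn]
  · rw [habs]
    constructor
    · intro h
      rw [eq_div_iff hM.ne'] at h
      have h2 : (135 + 78 * a) * N ^ 2 = D ^ 2 := by
        have h3 : (135 + 78 * a) * N ^ 2 / D ^ 2 = 1 := by rw [← hsq, h]; norm_num
        field_simp at h3
        linarith
      have h5 : 16 * (135 + 78 * a) * (t - (3 - a) / 6) ^ 2 * Q = 0 := by
        rw [← hmain]; linarith
      have hts' : x - x ^ 2 = (3 - a) / 6 := by
        rcases mul_eq_zero.mp h5 with h6 | h6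
        · rcases mul_eq_zero.mp h6 with h7 | h7
          · exact absurd h7 (by positivity)
          · have h8 : t - (3 - a) / 6 = 0 := sq_eq_zero_iff.mp h7
            rw [ht_def] at h8
            linarith
        · exact absurd h6 hQpos.ne'
      have hsq2 : (6 * x - 3) ^ 2 = b ^ 2 := by
        linear_combination (-36 : ℝ) * hts' - hb2
      have hfact : (6 * x - 3 - b) * (6 * x - 3 + b) = 0 := by linear_combination hsq2
      rcases mul_eq_zero.mp hfact with h' | h'
      · left; rw [hx₁]; linarith
      · right; rw [hx₁]; linarith
    · intro h
      have hts' : x - x ^ 2 = (3 - a) / 6 := by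
        rcases h with h' | h'
        · rw [hx₁] at h'
          rw [h']
          linear_combination (-1/36 : ℝ) * hb2
        · rw [hx₁] at h'
          rw [h']
          linear_combination (-1/36 : ℝ) * hb2
      have hz : (t - (3 - a) / 6) ^ 2 = 0 := by
        rw [ht_def, hts']; ring
      have h2 : (135 + 78 * a) * N ^ 2 = D ^ 2 := by
        have h5 : D ^ 2 - (135 + 78 * a) * N ^ 2 = 0 := by
          rw [hmain, hz]; ring
        linarith
      have h3 : (|N| / D * M) ^ 2 = 1 := by
        rw [hsq, h2, div_self (by positivity)]
      have hfac : (|N| / D * M - 1) * (|N| / D * M + 1) = 0 := by linear_combination h3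
      rw [eq_div_iff hM.ne']
      rcases mul_eq_zero.mp hfac with h' | h'
      · linarith
      · linarith
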